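/- For every twice-differentiable function ψ : ℝ → ℂ², the ladder operators of the harmonic Lévy-Leblond equation satisfy the anticommutation relation {b, b†} = 2β·H_sch pointwise: b(b†ψ)(x) + b†(bψ)(x) = −2ψ″(x) + βk x² ψ(x) − 2ik x γ₊ ψ(x) for all x ∈ ℝ. (Here 2β·H_sch ψ = −2ψ″ + βk x² ψ − 2ikx γ₊ ψ, with H_sch = (1/β)H_LL².) -/

import Mathlib

open Matrix

noncomputable section

/-- The gamma matrix `γ¹ = [[1,0],[0,−1]]`. -/
def γ1 : Matrix (Fin 2) (Fin 2) ℂ := !![1, 0; 0, -1]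

/-- The gamma matrix `γ₊ = [[0,1],[0,0]]`. -/
def γp : Matrix (Fin 2) (Fin 2) ℂ := !![0, 1; 0, 0]

/-- The gamma matrix `γ₋ = [[0,0],[1,0]]`. -/
def γm : Matrix (Fin 2) (Fin 2) ℂ := !![0, 0; 1, 0]

/-- The harmonic Lévy-Leblond Hamiltonian:
`(H_LL ψ)(x) = β γ₋ ψ(x) − i γ¹ ψ′(x) + (k/2) x² γ₊ ψ(x)`. -/
def HLL (β k : ℝ) (ψ : ℝ → (Fin 2 → ℂ)) : ℝ → (Fin 2 → ℂ) :=
  fun x => (β : ℂ) • γm.mulVec (ψ x) - Complex.I • γ1.mulVec (deriv ψ x)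
    + ((k / 2 * x ^ 2 : ℝ) : ℂ) • γp.mulVec (ψ x)

/-- The lowering operator:
`(bψ)(x) = √(βk/2)·x·ψ(x) + ψ′(x) − i√(k/(2β)) γ₊ ψ(x)`. -/
def lower (β k : ℝ) (ψ : ℝ → (Fin 2 → ℂ)) : ℝ → (Fin 2 → ℂ) :=
  fun x => ((Real.sqrt (β * k / 2) * x : ℝ) : ℂ) • ψ x + deriv ψ x
    - (Complex.I * ((Real.sqrt (k / (2 * β)) : ℝ) : ℂ)) • γp.mulVec (ψ x)

/-- The raising operator:
`(b†ψ)(x) = √(βk/2)·x·ψ(x) − ψ′(x) − i√(k/(2β)) γ₊ ψ(x)`. -/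
def raise (β k : ℝ) (ψ : ℝ → (Fin 2 → ℂ)) : ℝ → (Fin 2 → ℂ) :=
  fun x => ((Real.sqrt (β * k / 2) * x : ℝ) : ℂ) • ψ x - deriv ψ x
    - (Complex.I * ((Real.sqrt (k / (2 * β)) : ℝ) : ℂ)) • γp.mulVec (ψ x)

-- auxiliary lemmas

lemma hasDerivAt_ofReal_mul (a x : ℝ) :
    HasDerivAt (fun x : ℝ => ((a * x : ℝ) : ℂ)) ((a : ℝ) : ℂ) x := by
  have h : HasDerivAt (fun x : ℝ => a * x) a x := by
    simpa using (hasDerivAt_id x).const_mul a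
  exact h.ofReal_comp

lemma hasDerivAt_mulVec (A : Matrix (Fin 2) (Fin 2) ℂ) (ψ : ℝ → Fin 2 → ℂ) (x : ℝ)
    (h : DifferentiableAt ℝ ψ x) :
    HasDerivAt (fun x => A.mulVec (ψ x)) (A.mulVec (deriv ψ x)) x :=
  (A.mulVecLin.restrictScalars ℝ).toContinuousLinearMap.hasFDerivAt.comp_hasDerivAt x
    h.hasDerivAt

lemma γp_γp (v : Fin 2 → ℂ) : γp.mulVec (γp.mulVec v) = 0 := by
  funext i
  fin_cases i <;> simp [γp, Matrix.mulVec, dotProduct, Fin.sum_univ_two]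

lemma hasDerivAt_raise (β k : ℝ) (ψ : ℝ → (Fin 2 → ℂ))
    (hψ1 : Differentiable ℝ ψ) (hψ2 : Differentiable ℝ (deriv ψ)) (x : ℝ) :
    HasDerivAt (raise β k ψ)
      (((Real.sqrt (β * k / 2) * x : ℝ) : ℂ) • deriv ψ x
        + ((Real.sqrt (β * k / 2) : ℝ) : ℂ) • ψ x
        - deriv (deriv ψ) x
        - (Complex.I * ((Real.sqrt (k / (2 * β)) : ℝ) : ℂ)) • γp.mulVec (deriv ψ x)) x := by
  have h1 := (hasDerivAt_ofReal_mul (Real.sqrt (β * k / 2)) x).smul (hψ1 x).hasDerivAt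
  have h2 := (hψ2 x).hasDerivAt
  have h3 := (hasDerivAt_mulVec γp ψ x (hψ1 x)).const_smul
    (Complex.I * ((Real.sqrt (k / (2 * β)) : ℝ) : ℂ))
  exact (h1.sub h2).sub h3

lemma hasDerivAt_lower (β k : ℝ) (ψ : ℝ → (Fin 2 → ℂ))
    (hψ1 : Differentiable ℝ ψ) (hψ2 : Differentiable ℝ (deriv ψ)) (x : ℝ) :
    HasDerivAt (lower β k ψ)
      (((Real.sqrt (β * k / 2) * x : ℝ) : ℂ) • deriv ψ x
        + ((Real.sqrt (β * k / 2) : ℝ) : ℂ) • ψ x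
        + deriv (deriv ψ) x
        - (Complex.I * ((Real.sqrt (k / (2 * β)) : ℝ) : ℂ)) • γp.mulVec (deriv ψ x)) x := by
  have h1 := (hasDerivAt_ofReal_mul (Real.sqrt (β * k / 2)) x).smul (hψ1 x).hasDerivAt
  have h2 := (hψ2 x).hasDerivAt
  have h3 := (hasDerivAt_mulVec γp ψ x (hψ1 x)).const_smul
    (Complex.I * ((Real.sqrt (k / (2 * β)) : ℝ) : ℂ))
  exact (h1.add h2).sub h3

/-- For every twice-differentiable `ψ : ℝ → ℂ²`, the ladder operators
satisfy the anticommutation relation `{b, b†} = 2β·H_sch` pointwise: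
`b(b†ψ)(x) + b†(bψ)(x) = −2ψ″(x) + βk x² ψ(x) − 2ik x γ₊ ψ(x)`. -/
theorem ladder_anticommutator (β k : ℝ) (hβ : 0 < β) (hk : 0 < k)
    (ψ : ℝ → (Fin 2 → ℂ))
    (hψ1 : Differentiable ℝ ψ) (hψ2 : Differentiable ℝ (deriv ψ)) :
    ∀ x : ℝ, lower β k (raise β k ψ) x + raise β k (lower β k ψ) x
      = (-2 : ℂ) • deriv (deriv ψ) x + ((β * k * x ^ 2 : ℝ) : ℂ) • ψ x
        - (2 * Complex.I * ((k * x : ℝ) : ℂ)) • γp.mulVec (ψ x) := by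
  intro x
  have hDr := (hasDerivAt_raise β k ψ hψ1 hψ2 x).deriv
  have hDl := (hasDerivAt_lower β k ψ hψ1 hψ2 x).deriv
  have haa : ((Real.sqrt (β * k / 2) : ℝ) : ℂ) * ((Real.sqrt (β * k / 2) : ℝ) : ℂ)
      = (β : ℂ) * (k : ℂ) / 2 := by
    rw [← Complex.ofReal_mul, Real.mul_self_sqrt (by positivity)]
    push_cast; ring
  have hac : ((Real.sqrt (β * k / 2) : ℝ) : ℂ) * ((Real.sqrt (k / (2 * β)) : ℝ) : ℂ)
      = (k : ℂ) / 2 := by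
    rw [← Complex.ofReal_mul, ← Real.sqrt_mul (by positivity),
      show β * k / 2 * (k / (2 * β)) = (k / 2) ^ 2 by field_simp,
      Real.sqrt_sq (by positivity)]
    push_cast; ring
  show ((Real.sqrt (β * k / 2) * x : ℝ) : ℂ) • raise β k ψ x + deriv (raise β k ψ) x
      - (Complex.I * ((Real.sqrt (k / (2 * β)) : ℝ) : ℂ)) • γp.mulVec (raise β k ψ x)
    + (((Real.sqrt (β * k / 2) * x : ℝ) : ℂ) • lower β k ψ x - deriv (lower β k ψ) x
      - (Complex.I * ((Real.sqrt (k / (2 * β)) : ℝ) : ℂ)) • γp.mulVec (lower β k ψ x)) = _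
  rw [hDr, hDl, show raise β k ψ x = ((Real.sqrt (β * k / 2) * x : ℝ) : ℂ) • ψ x - deriv ψ x
      - (Complex.I * ((Real.sqrt (k / (2 * β)) : ℝ) : ℂ)) • γp.mulVec (ψ x) from rfl,
    show lower β k ψ x = ((Real.sqrt (β * k / 2) * x : ℝ) : ℂ) • ψ x + deriv ψ x
      - (Complex.I * ((Real.sqrt (k / (2 * β)) : ℝ) : ℂ)) • γp.mulVec (ψ x) from rfl]
  simp only [Matrix.mulVec_add, Matrix.mulVec_sub, Matrix.mulVec_smul, γp_γp, smul_zero,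
    Complex.ofReal_mul]
  set A : ℂ := ((Real.sqrt (β * k / 2) : ℝ) : ℂ) with hA
  set C : ℂ := ((Real.sqrt (k / (2 * β)) : ℝ) : ℂ) with hC
  clear_value A C
  match_scalars
  · linear_combination (2 * (x:ℂ)^2) * haa
  · ring
  · linear_combination (-4 * Complex.I * (x:ℂ)) * hac
  · ring
  · ring

end
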